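/- Let A be the Cartan matrix of the affine Lie algebra C_ℓ^{(1)} (ℓ ≥ 2): the (ℓ+1)×(ℓ+1) tridiagonal matrix with diagonal entries 2, entries a_{i,i+1} = -1 for 0 ≤ i ≤ ℓ-1 except a_{0,1} handled below, and subdiagonal/superdiagonal given by a_{10} = -2, a_{ℓ-1,ℓ} = -2, and all other off-diagonal neighbor entries -1. A vector ψ ∈ ℤ^{ℓ+1} satisfying ψ_0 + ψ_1 + ⋯ + ψ_ℓ = 0 lies in the ℤ-span of the columns of A if and only if the sum of the even-indexed coordinates ψ_0 + ψ_2 + ψ_4 + ⋯ is even. -/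

import Mathlib

private lemma deltaFin (N a : ℕ) (f : ℕ → ℤ) :
    (∑ j : Fin N, if (j : ℕ) = a then f (j : ℕ) else 0) = if a < N then f a else 0 := by
  rw [Fin.sum_univ_eq_sum_range (fun m => if m = a then f m else 0) N]
  rw [Finset.sum_ite_eq' (Finset.range N) a f]
  simp [Finset.mem_range]

private lemma peel {M : Type*} [AddCommMonoid M] (k : ℕ) (G : ℕ → M) :
    ∑ m ∈ Finset.range (k + 2 + 1), G m
      = (∑ m ∈ Finset.range (k + 1), G m) + G (k + 1) + G (k + 2) := by
  rw [Finset.sum_range_succ, show k + 2 = k + 1 + 1 by omega, Finset.sum_range_succ]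

private lemma rowSum (k : ℕ) (A : Matrix (Fin (k + 2 + 1)) (Fin (k + 2 + 1)) ℤ)
    (hA : ∀ i j : Fin (k + 2 + 1), A i j =
      if i = j then 2
      else if i.val = 1 ∧ j.val = 0 then -2
      else if i.val = k + 2 - 1 ∧ j.val = k + 2 then -2
      else if i.val + 1 = j.val ∨ j.val + 1 = i.val then -1
      else 0)
    (w : ℕ → ℤ) (hw0 : ∀ m, k + 3 ≤ m → w m = 0) (i : Fin (k + 2 + 1)) :
    A.mulVec (fun j => w j.val) i =
      2 * w i.val - w (i.val + 1) - (if i.val = 0 then 0 else w (i.val - 1))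
        - (if i.val = 1 then w 0 else 0) - (if i.val = k + 1 then w (k + 2) else 0) := by
  have key : ∀ j : Fin (k + 2 + 1), A i j * w j.val =
      (if (j : ℕ) = i.val then 2 * w (j : ℕ) else 0)
      + (if (j : ℕ) = i.val + 1 then -w (j : ℕ) else 0)
      + (if (j : ℕ) + 1 = i.val then -w (j : ℕ) else 0)
      + (if i.val = 1 ∧ (j : ℕ) = 0 then -w (j : ℕ) else 0)
      + (if i.val = k + 1 ∧ (j : ℕ) = k + 2 then -w (j : ℕ) else 0) := by
    intro j
    rw [hA]
    have hi := i.isLt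
    have hj := j.isLt
    simp only [Fin.ext_iff]
    split_ifs <;> omega
  have expand : A.mulVec (fun j => w j.val) i
      = (∑ j : Fin (k + 2 + 1), if (j : ℕ) = i.val then 2 * w (j : ℕ) else 0)
      + (∑ j : Fin (k + 2 + 1), if (j : ℕ) = i.val + 1 then -w (j : ℕ) else 0)
      + (∑ j : Fin (k + 2 + 1), if (j : ℕ) + 1 = i.val then -w (j : ℕ) else 0)
      + (∑ j : Fin (k + 2 + 1), if i.val = 1 ∧ (j : ℕ) = 0 then -w (j : ℕ) else 0)
      + (∑ j : Fin (k + 2 + 1), if i.val = k + 1 ∧ (j : ℕ) = k + 2 then -w (j : ℕ) else 0) := by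
    simp only [Matrix.mulVec, dotProduct]
    rw [← Finset.sum_add_distrib, ← Finset.sum_add_distrib, ← Finset.sum_add_distrib,
      ← Finset.sum_add_distrib]
    exact Finset.sum_congr rfl fun j _ => key j
  rw [expand]
  have S1 : (∑ j : Fin (k + 2 + 1), if (j : ℕ) = i.val then 2 * w (j : ℕ) else 0)
      = 2 * w i.val := by
    rw [deltaFin (k + 2 + 1) i.val (fun m => 2 * w m), if_pos i.isLt]
  have S2 : (∑ j : Fin (k + 2 + 1), if (j : ℕ) = i.val + 1 then -w (j : ℕ) else 0)
      = -w (i.val + 1) := by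
    rw [deltaFin (k + 2 + 1) (i.val + 1) (fun m => -w m)]
    split
    · rfl
    · rw [hw0 (i.val + 1) (by omega)]; ring
  have S3 : (∑ j : Fin (k + 2 + 1), if (j : ℕ) + 1 = i.val then -w (j : ℕ) else 0)
      = -(if i.val = 0 then 0 else w (i.val - 1)) := by
    by_cases h0 : i.val = 0
    · rw [if_pos h0]
      rw [Finset.sum_eq_zero]
      · ring
      · intro j _
        rw [if_neg (by omega)]
    · rw [if_neg h0]
      have : ∀ j : Fin (k + 2 + 1),
          (if (j : ℕ) + 1 = i.val then -w (j : ℕ) else 0)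
            = (if (j : ℕ) = i.val - 1 then -w (j : ℕ) else 0) := by
        intro j
        congr 1
        simp only [eq_iff_iff]
        omega
      rw [Finset.sum_congr rfl fun j _ => this j]
      rw [deltaFin (k + 2 + 1) (i.val - 1) (fun m => -w m), if_pos (by omega)]
  have S4 : (∑ j : Fin (k + 2 + 1), if i.val = 1 ∧ (j : ℕ) = 0 then -w (j : ℕ) else 0)
      = -(if i.val = 1 then w 0 else 0) := by
    by_cases h1 : i.val = 1
    · simp only [h1, true_and, if_pos]
      rw [deltaFin (k + 2 + 1) 0 (fun m => -w m), if_pos (by omega)]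
    · simp only [h1, false_and, if_false, if_neg h1]
      rw [Finset.sum_eq_zero fun j _ => rfl]
      ring
  have S5 : (∑ j : Fin (k + 2 + 1), if i.val = k + 1 ∧ (j : ℕ) = k + 2 then -w (j : ℕ) else 0)
      = -(if i.val = k + 1 then w (k + 2) else 0) := by
    by_cases h1 : i.val = k + 1
    · simp only [h1, true_and, if_pos]
      rw [deltaFin (k + 2 + 1) (k + 2) (fun m => -w m), if_pos (by omega)]
    · simp only [h1, false_and, if_false, if_neg h1]
      rw [Finset.sum_eq_zero fun j _ => rfl]
      ring
  rw [S1, S2, S3, S4, S5]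
  ring

private lemma colSum (k : ℕ) (A : Matrix (Fin (k + 2 + 1)) (Fin (k + 2 + 1)) ℤ)
    (hA : ∀ i j : Fin (k + 2 + 1), A i j =
      if i = j then 2
      else if i.val = 1 ∧ j.val = 0 then -2
      else if i.val = k + 2 - 1 ∧ j.val = k + 2 then -2
      else if i.val + 1 = j.val ∨ j.val + 1 = i.val then -1
      else 0)
    (w : ℕ → ℤ) (hw0 : ∀ m, k + 3 ≤ m → w m = 0) (j : Fin (k + 2 + 1)) :
    (∑ i : Fin (k + 2 + 1), w i.val * A i j) =
      2 * w j.val - w (j.val + 1) - (if j.val = 0 then 0 else w (j.val - 1))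
        - (if j.val = 0 then w 1 else 0) - (if j.val = k + 2 then w (k + 1) else 0) := by
  have key : ∀ i : Fin (k + 2 + 1), w i.val * A i j =
      (if (i : ℕ) = j.val then 2 * w (i : ℕ) else 0)
      + (if (i : ℕ) = j.val + 1 then -w (i : ℕ) else 0)
      + (if (i : ℕ) + 1 = j.val then -w (i : ℕ) else 0)
      + (if j.val = 0 ∧ (i : ℕ) = 1 then -w (i : ℕ) else 0)
      + (if j.val = k + 2 ∧ (i : ℕ) = k + 1 then -w (i : ℕ) else 0) := by
    intro i
    rw [hA]
    have hi := i.isLt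
    have hj := j.isLt
    simp only [Fin.ext_iff]
    split_ifs <;> omega
  have expand : (∑ i : Fin (k + 2 + 1), w i.val * A i j)
      = (∑ i : Fin (k + 2 + 1), if (i : ℕ) = j.val then 2 * w (i : ℕ) else 0)
      + (∑ i : Fin (k + 2 + 1), if (i : ℕ) = j.val + 1 then -w (i : ℕ) else 0)
      + (∑ i : Fin (k + 2 + 1), if (i : ℕ) + 1 = j.val then -w (i : ℕ) else 0)
      + (∑ i : Fin (k + 2 + 1), if j.val = 0 ∧ (i : ℕ) = 1 then -w (i : ℕ) else 0)
      + (∑ i : Fin (k + 2 + 1), if j.val = k + 2 ∧ (i : ℕ) = k + 1 then -w (i : ℕ) else 0) := by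
    rw [← Finset.sum_add_distrib, ← Finset.sum_add_distrib, ← Finset.sum_add_distrib,
      ← Finset.sum_add_distrib]
    exact Finset.sum_congr rfl fun i _ => key i
  rw [expand]
  have S1 : (∑ i : Fin (k + 2 + 1), if (i : ℕ) = j.val then 2 * w (i : ℕ) else 0)
      = 2 * w j.val := by
    rw [deltaFin (k + 2 + 1) j.val (fun m => 2 * w m), if_pos j.isLt]
  have S2 : (∑ i : Fin (k + 2 + 1), if (i : ℕ) = j.val + 1 then -w (i : ℕ) else 0)
      = -w (j.val + 1) := by
    rw [deltaFin (k + 2 + 1) (j.val + 1) (fun m => -w m)]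
    split
    · rfl
    · rw [hw0 (j.val + 1) (by omega)]; ring
  have S3 : (∑ i : Fin (k + 2 + 1), if (i : ℕ) + 1 = j.val then -w (i : ℕ) else 0)
      = -(if j.val = 0 then 0 else w (j.val - 1)) := by
    by_cases h0 : j.val = 0
    · rw [if_pos h0]
      rw [Finset.sum_eq_zero]
      · ring
      · intro i _
        rw [if_neg (by omega)]
    · rw [if_neg h0]
      have : ∀ i : Fin (k + 2 + 1),
          (if (i : ℕ) + 1 = j.val then -w (i : ℕ) else 0)
            = (if (i : ℕ) = j.val - 1 then -w (i : ℕ) else 0) := by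
        intro i
        congr 1
        simp only [eq_iff_iff]
        omega
      rw [Finset.sum_congr rfl fun i _ => this i]
      rw [deltaFin (k + 2 + 1) (j.val - 1) (fun m => -w m), if_pos (by omega)]
  have S4 : (∑ i : Fin (k + 2 + 1), if j.val = 0 ∧ (i : ℕ) = 1 then -w (i : ℕ) else 0)
      = -(if j.val = 0 then w 1 else 0) := by
    by_cases h1 : j.val = 0
    · simp only [h1, true_and, if_pos]
      rw [deltaFin (k + 2 + 1) 1 (fun m => -w m), if_pos (by omega)]
    · simp only [h1, false_and, if_false, if_neg h1]
      rw [Finset.sum_eq_zero fun i _ => rfl]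
      ring
  have S5 : (∑ i : Fin (k + 2 + 1), if j.val = k + 2 ∧ (i : ℕ) = k + 1 then -w (i : ℕ) else 0)
      = -(if j.val = k + 2 then w (k + 1) else 0) := by
    by_cases h1 : j.val = k + 2
    · simp only [h1, true_and, if_pos]
      rw [deltaFin (k + 2 + 1) (k + 1) (fun m => -w m), if_pos (by omega)]
    · simp only [h1, false_and, if_false, if_neg h1]
      rw [Finset.sum_eq_zero fun i _ => rfl]
      ring
  rw [S1, S2, S3, S4, S5]
  ring

/-- Stmt 1: In type `C_ℓ^{(1)}` (ℓ ≥ 2), a level-zero vector ψ lies in the ℤ-column-span of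
the Cartan matrix iff the sum of its even-indexed coordinates is even. -/
theorem stmt1 (ℓ : ℕ) (hℓ : 2 ≤ ℓ)
    (A : Matrix (Fin (ℓ + 1)) (Fin (ℓ + 1)) ℤ)
    (hA : ∀ i j : Fin (ℓ + 1), A i j =
      if i = j then 2
      else if i.val = 1 ∧ j.val = 0 then -2
      else if i.val = ℓ - 1 ∧ j.val = ℓ then -2
      else if i.val + 1 = j.val ∨ j.val + 1 = i.val then -1
      else 0)
    (ψ : Fin (ℓ + 1) → ℤ) (hψ : ∑ i, ψ i = 0) :
    (∃ x : Fin (ℓ + 1) → ℤ, A.mulVec x = ψ) ↔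
      2 ∣ ∑ i ∈ Finset.univ.filter (fun i : Fin (ℓ + 1) => i.val % 2 = 0), ψ i := by
  obtain ⟨k, rfl⟩ : ∃ k, ℓ = k + 2 := ⟨ℓ - 2, by omega⟩
  constructor
  · rintro ⟨x, hx⟩
    set w₂ : ℕ → ℤ := fun m => if m < k + 2 + 1 ∧ m % 2 = 0 then 1 else 0 with hw₂
    have hw0 : ∀ m, k + 3 ≤ m → w₂ m = 0 := by
      intro m hm
      rw [hw₂]
      simp only
      rw [if_neg (by omega)]
    have hE : ∑ i ∈ Finset.univ.filter (fun i : Fin (k + 2 + 1) => i.val % 2 = 0), ψ i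
        = ∑ j : Fin (k + 2 + 1), (∑ i : Fin (k + 2 + 1), w₂ i.val * A i j) * x j := by
      rw [Finset.sum_filter]
      calc (∑ i : Fin (k + 2 + 1), if i.val % 2 = 0 then ψ i else 0)
          = ∑ i : Fin (k + 2 + 1), w₂ i.val * ψ i := by
            refine Finset.sum_congr rfl fun i _ => ?_
            have hi := i.isLt
            rw [hw₂]
            simp only
            by_cases h : i.val % 2 = 0
            · rw [if_pos h, if_pos (by omega), one_mul]
            · rw [if_neg h, if_neg (by omega), zero_mul]
        _ = ∑ i : Fin (k + 2 + 1), ∑ j : Fin (k + 2 + 1), w₂ i.val * (A i j * x j) := by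
            rw [← hx]
            simp only [Matrix.mulVec, dotProduct, Finset.mul_sum]
        _ = ∑ j : Fin (k + 2 + 1), ∑ i : Fin (k + 2 + 1), (w₂ i.val * A i j) * x j := by
            rw [Finset.sum_comm]
            simp only [mul_assoc]
        _ = ∑ j : Fin (k + 2 + 1), (∑ i : Fin (k + 2 + 1), w₂ i.val * A i j) * x j := by
            refine Finset.sum_congr rfl fun j _ => ?_
            rw [Finset.sum_mul]
    rw [hE]
    refine Finset.dvd_sum fun j _ => dvd_mul_of_dvd_left ?_ (x j)
    rw [colSum k A hA w₂ hw0 j]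
    have hj := j.isLt
    simp only [hw₂]
    split_ifs <;> first | omega | tauto
  · intro hE
    set φ : ℕ → ℤ := fun m => if h : m < k + 2 + 1 then ψ ⟨m, h⟩ else 0 with hφ
    have hφψ : ∀ i : Fin (k + 2 + 1), φ i.val = ψ i := by
      intro i
      rw [hφ]
      simp [Fin.eta, i.isLt]
    set T : ℕ → ℤ := fun m => ∑ j ∈ Finset.range m, ((m : ℤ) - (j : ℤ)) * φ j with hT'
    have hS : ∑ m ∈ Finset.range (k + 2 + 1), φ m = 0 := by
      rw [← Fin.sum_univ_eq_sum_range φ (k + 2 + 1), ← hψ]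
      exact Finset.sum_congr rfl fun i _ => hφψ i
    have hT : ∀ m : ℕ, T (m + 1) = T m + ∑ j ∈ Finset.range (m + 1), φ j := by
      intro m
      simp only [hT']
      calc (∑ j ∈ Finset.range (m + 1), (((m + 1 : ℕ) : ℤ) - (j : ℤ)) * φ j)
          = (∑ j ∈ Finset.range (m + 1), (((m : ℕ) : ℤ) - (j : ℤ)) * φ j)
            + ∑ j ∈ Finset.range (m + 1), φ j := by
            rw [← Finset.sum_add_distrib]
            refine Finset.sum_congr rfl fun j _ => ?_
            push_cast
            ring
        _ = ((∑ j ∈ Finset.range m, (((m : ℕ) : ℤ) - (j : ℤ)) * φ j)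
            + (((m : ℕ) : ℤ) - (m : ℤ)) * φ m) + ∑ j ∈ Finset.range (m + 1), φ j := by
            rw [Finset.sum_range_succ]
        _ = (∑ j ∈ Finset.range m, (((m : ℕ) : ℤ) - (j : ℤ)) * φ j)
            + ∑ j ∈ Finset.range (m + 1), φ j := by ring
    have hpar : 2 ∣ φ (k + 2) - T (k + 1) := by
      have K1 : (∑ m ∈ Finset.range (k + 1), ((φ m : ℤ) : ZMod 2))
          + ((φ (k + 1) : ℤ) : ZMod 2) + ((φ (k + 2) : ℤ) : ZMod 2) = 0 := by
        have h1 : ((∑ m ∈ Finset.range (k + 2 + 1), φ m : ℤ) : ZMod 2) = 0 := by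
          rw [hS]; simp
        rw [Int.cast_sum, peel k (fun m => ((φ m : ℤ) : ZMod 2))] at h1
        exact h1
      have K2 : ((∑ m ∈ Finset.range (k + 1), ((φ m : ℤ) : ZMod 2))
            + (∑ m ∈ Finset.range (k + 1), ((m : ℕ) : ZMod 2) * ((φ m : ℤ) : ZMod 2)))
          + (1 + ((k + 1 : ℕ) : ZMod 2)) * ((φ (k + 1) : ℤ) : ZMod 2)
          + (1 + ((k + 2 : ℕ) : ZMod 2)) * ((φ (k + 2) : ℤ) : ZMod 2) = 0 := by
        have h0 : ((∑ i ∈ Finset.univ.filter (fun i : Fin (k + 2 + 1) => i.val % 2 = 0), ψ i : ℤ)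
            : ZMod 2) = 0 := by
          obtain ⟨c, hc⟩ := hE
          rw [hc]
          push_cast
          have h2 : (2 : ZMod 2) = 0 := by decide
          rw [h2, zero_mul]
        rw [Finset.sum_filter, Int.cast_sum] at h0
        have hpt : ∀ i : Fin (k + 2 + 1), (((if i.val % 2 = 0 then ψ i else 0) : ℤ) : ZMod 2)
            = (1 + ((i.val : ℕ) : ZMod 2)) * ((φ i.val : ℤ) : ZMod 2) := by
          intro i
          rw [hφψ i]
          rcases Nat.mod_two_eq_zero_or_one i.val with h | h
          · have hc0 : ((i.val : ℕ) : ZMod 2) = 0 := by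
              rw [← ZMod.natCast_mod, h, Nat.cast_zero]
            rw [if_pos h, hc0]
            ring
          · have hc1 : ((i.val : ℕ) : ZMod 2) = 1 := by
              rw [← ZMod.natCast_mod, h, Nat.cast_one]
            have h2 : (1 + 1 : ZMod 2) = 0 := by decide
            rw [if_neg (by omega), hc1, h2, zero_mul, Int.cast_zero]
        rw [Finset.sum_congr rfl (fun i _ => hpt i)] at h0
        rw [Fin.sum_univ_eq_sum_range
          (fun m => (1 + ((m : ℕ) : ZMod 2)) * ((φ m : ℤ) : ZMod 2)) (k + 2 + 1)] at h0
        rw [peel k (fun m => (1 + ((m : ℕ) : ZMod 2)) * ((φ m : ℤ) : ZMod 2))] at h0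
        have e2 : (∑ m ∈ Finset.range (k + 1), (1 + ((m : ℕ) : ZMod 2)) * ((φ m : ℤ) : ZMod 2))
            = (∑ m ∈ Finset.range (k + 1), ((φ m : ℤ) : ZMod 2))
              + (∑ m ∈ Finset.range (k + 1), ((m : ℕ) : ZMod 2) * ((φ m : ℤ) : ZMod 2)) := by
          rw [← Finset.sum_add_distrib]
          exact Finset.sum_congr rfl fun m _ => by ring
        rw [e2] at h0
        linear_combination h0
      have hcast : ((φ (k + 2) - T (k + 1) : ℤ) : ZMod 2) = 0 := by
        have eT : ((T (k + 1) : ℤ) : ZMod 2)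
            = ((k + 1 : ℕ) : ZMod 2) * (∑ m ∈ Finset.range (k + 1), ((φ m : ℤ) : ZMod 2))
              - (∑ m ∈ Finset.range (k + 1), ((m : ℕ) : ZMod 2) * ((φ m : ℤ) : ZMod 2)) := by
          simp only [hT']
          rw [Int.cast_sum, Finset.mul_sum, ← Finset.sum_sub_distrib]
          refine Finset.sum_congr rfl fun m _ => ?_
          push_cast
          ring
        rw [Int.cast_sub, eT]
        push_cast at K1 K2 ⊢
        linear_combination (-((k : ZMod 2) + 2)) * K1 + K2
      have hd := (ZMod.intCast_zmod_eq_zero_iff_dvd (φ (k + 2) - T (k + 1)) 2).mp hcast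
      exact_mod_cast hd
    obtain ⟨e, he⟩ := hpar
    set X : ℕ → ℤ := fun m => if m = k + 2 then e else if m < k + 2 then -T m else 0 with hX
    have hw0X : ∀ m, k + 3 ≤ m → X m = 0 := by
      intro m hm
      rw [hX]
      simp only
      rw [if_neg (by omega), if_neg (by omega)]
    have hXlt : ∀ m, m < k + 2 → X m = -T m := by
      intro m hm
      rw [hX]
      simp only
      rw [if_neg (by omega), if_pos hm]
    have hXtop : X (k + 2) = e := by
      rw [hX]
      simp
    have hT0 : T 0 = 0 := by
      simp [hT']
    have hX0 : X 0 = 0 := by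
      rw [hXlt 0 (by omega), hT0, neg_zero]
    have hT1 : T 1 = φ 0 := by
      simp [hT', Finset.sum_range_one]
    refine ⟨fun i => X i.val, ?_⟩
    funext i
    rw [rowSum k A hA X hw0X i, ← hφψ i]
    have hn : i.val < k + 2 + 1 := i.isLt
    by_cases h2 : i.val = k + 2
    · rw [h2, hXtop, if_neg (show ¬(k + 2 = 0) by omega), if_neg (show ¬(k + 2 = 1) by omega),
        if_neg (show ¬(k + 2 = k + 1) by omega), hw0X (k + 2 + 1) (by omega),
        show k + 2 - 1 = k + 1 by omega, hXlt (k + 1) (by omega)]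
      linarith [he]
    by_cases h1 : i.val = k + 1
    · rw [h1, if_neg (show ¬(k + 1 = 0) by omega),
        if_pos (show k + 1 = k + 1 from rfl),
        show k + 1 + 1 = k + 2 by omega, hXtop, show k + 1 - 1 = k by omega,
        hXlt (k + 1) (by omega), hXlt k (by omega)]
      have hz : (if k + 1 = 1 then X 0 else 0) = 0 := by
        split
        · exact hX0
        · rfl
      rw [hz]
      have h3 := hT k
      have h4 := peel k φ
      rw [hS] at h4
      linarith [he, h3, h4]
    by_cases h0 : i.val = 0
    · rw [h0, if_pos (show (0:ℕ) = 0 from rfl), if_neg (show ¬((0:ℕ) = 1) by omega),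
        if_neg (show ¬(0 = k + 1) by omega), hX0,
        show (0:ℕ) + 1 = 1 from rfl, hXlt 1 (by omega), hT1]
      ring
    · obtain ⟨m, hm⟩ : ∃ m, i.val = m + 1 := ⟨i.val - 1, by omega⟩
      have hmk : m + 1 ≤ k := by omega
      rw [hm, if_neg (show ¬(m + 1 = 0) by omega),
        hXlt (m + 1) (by omega), hXlt (m + 1 + 1) (by omega),
        show m + 1 - 1 = m by omega, hXlt m (by omega),
        if_neg (show ¬(m + 1 = k + 1) by omega)]
      have hz : (if m + 1 = 1 then X 0 else 0) = 0 := by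
        split
        · exact hX0
        · rfl
      rw [hz]
      have h3 := hT m
      have h4 := hT (m + 1)
      have h5 := Finset.sum_range_succ φ (m + 1)
      linarith
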